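/- Let f : ℝ^D → ℝ^k be piecewise affine with f(x) = A[x]x + b[x], and suppose the loss ℓ(·, y) is convex and K₂-Lipschitz in its first argument, ‖x_i‖₂ ≤ R for all training points, ‖A[x]‖₂ ≤ K₁ for all x, and ‖u_{ij}‖₂ ≤ ε. Then the sum over i = 1..n, j = 1..m of ℓ(f(x_i + u_{ij}), y_i) is bounded above by Σᵢ m·ℓ(f(x_i), y_i) + R·K₂·Σ_{i,j} ‖A[x_i+u_{ij}] − A[x_i]‖₂ + K₂·Σ_{i,j} ‖b[x_i+u_{ij}] − b[x_i]‖₂ + K₁·K₂·m·n·ε. -/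
import Mathlib


/-- Exact non-asymptotic version of Theorem 1: the augmented loss sum is bounded
by the original losses plus slope- and offset-variation terms plus `K₁ K₂ m n ε`. -/
theorem augmented_loss_bound {D k n m : ℕ} {Y : Type*}
    (f : EuclideanSpace ℝ (Fin D) → EuclideanSpace ℝ (Fin k))
    (A : EuclideanSpace ℝ (Fin D) → (EuclideanSpace ℝ (Fin D) →L[ℝ] EuclideanSpace ℝ (Fin k)))
    (b : EuclideanSpace ℝ (Fin D) → EuclideanSpace ℝ (Fin k))
    (hf : ∀ x, f x = A x x + b x)
    (ℓ : EuclideanSpace ℝ (Fin k) → Y → ℝ) (K₂ : NNReal)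
    (hconv : ∀ y : Y, ConvexOn ℝ Set.univ (fun v => ℓ v y))
    (hlip : ∀ y : Y, LipschitzWith K₂ (fun v => ℓ v y))
    (x : Fin n → EuclideanSpace ℝ (Fin D)) (y : Fin n → Y)
    (u : Fin n → Fin m → EuclideanSpace ℝ (Fin D))
    (R K₁ ε : ℝ)
    (hx : ∀ i, ‖x i‖ ≤ R)
    (hA : ∀ z, ‖A z‖ ≤ K₁)
    (hu : ∀ i j, ‖u i j‖ ≤ ε) :
    ∑ i, ∑ j, ℓ (f (x i + u i j)) (y i)
      ≤ (∑ i, (m : ℝ) * ℓ (f (x i)) (y i))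
        + R * K₂ * ∑ i, ∑ j, ‖A (x i + u i j) - A (x i)‖
        + K₂ * ∑ i, ∑ j, ‖b (x i + u i j) - b (x i)‖
        + K₁ * K₂ * m * n * ε := by
  rcases Nat.eq_zero_or_pos n with hn | hn
  · subst hn; simp
  rcases Nat.eq_zero_or_pos m with hm | hm
  · subst hm; simp
  have hR : (0:ℝ) ≤ R := le_trans (norm_nonneg _) (hx ⟨0, hn⟩)
  have hε : (0:ℝ) ≤ ε := le_trans (norm_nonneg _) (hu ⟨0, hn⟩ ⟨0, hm⟩)
  have key : ∀ i j, ℓ (f (x i + u i j)) (y i)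
      ≤ ℓ (f (x i)) (y i) + (R * K₂ * ‖A (x i + u i j) - A (x i)‖
        + K₂ * ‖b (x i + u i j) - b (x i)‖ + K₁ * K₂ * ε) := by
    intro i j
    have hlipd := (hlip (y i)).dist_le_mul (f (x i + u i j)) (f (x i))
    rw [Real.dist_eq] at hlipd
    have h1 : ℓ (f (x i + u i j)) (y i) - ℓ (f (x i)) (y i)
        ≤ K₂ * dist (f (x i + u i j)) (f (x i)) := le_trans (le_abs_self _) hlipd
    have hdist : dist (f (x i + u i j)) (f (x i))
        ≤ R * ‖A (x i + u i j) - A (x i)‖ + ‖b (x i + u i j) - b (x i)‖ + K₁ * ε := by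
      rw [dist_eq_norm, hf, hf]
      have hid : A (x i + u i j) (x i + u i j) + b (x i + u i j) - (A (x i) (x i) + b (x i))
          = ((A (x i + u i j) - A (x i)) (x i) + A (x i + u i j) (u i j))
            + (b (x i + u i j) - b (x i)) := by
        simp only [ContinuousLinearMap.sub_apply, map_add]
        abel
      rw [hid]
      have e1 : ‖(A (x i + u i j) - A (x i)) (x i)‖ ≤ R * ‖A (x i + u i j) - A (x i)‖ := by
        calc ‖(A (x i + u i j) - A (x i)) (x i)‖
            ≤ ‖A (x i + u i j) - A (x i)‖ * ‖x i‖ := ContinuousLinearMap.le_opNorm _ _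
          _ ≤ ‖A (x i + u i j) - A (x i)‖ * R :=
              mul_le_mul_of_nonneg_left (hx i) (norm_nonneg _)
          _ = R * ‖A (x i + u i j) - A (x i)‖ := mul_comm _ _
      have e2 : ‖A (x i + u i j) (u i j)‖ ≤ K₁ * ε := by
        calc ‖A (x i + u i j) (u i j)‖ ≤ ‖A (x i + u i j)‖ * ‖u i j‖ :=
              ContinuousLinearMap.le_opNorm _ _
          _ ≤ K₁ * ε := mul_le_mul (hA _) (hu i j) (norm_nonneg _)
              (le_trans (norm_nonneg (A (x i + u i j))) (hA (x i + u i j)))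
      have e3 := norm_add_le ((A (x i + u i j) - A (x i)) (x i) + A (x i + u i j) (u i j))
        (b (x i + u i j) - b (x i))
      have e4 := norm_add_le ((A (x i + u i j) - A (x i)) (x i)) (A (x i + u i j) (u i j))
      linarith
    have hK2 : (0:ℝ) ≤ (K₂:ℝ) := K₂.2
    nlinarith [mul_le_mul_of_nonneg_left hdist hK2]
  calc ∑ i, ∑ j, ℓ (f (x i + u i j)) (y i)
      ≤ ∑ i, ∑ j, (ℓ (f (x i)) (y i) + (R * K₂ * ‖A (x i + u i j) - A (x i)‖
        + K₂ * ‖b (x i + u i j) - b (x i)‖ + K₁ * K₂ * ε)) := by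
        exact Finset.sum_le_sum fun i _ => Finset.sum_le_sum fun j _ => key i j
    _ = (∑ i, (m : ℝ) * ℓ (f (x i)) (y i))
        + R * K₂ * ∑ i, ∑ j, ‖A (x i + u i j) - A (x i)‖
        + K₂ * ∑ i, ∑ j, ‖b (x i + u i j) - b (x i)‖
        + K₁ * K₂ * m * n * ε := by
        simp only [Finset.sum_add_distrib, Finset.sum_const, Finset.card_univ,
          Fintype.card_fin, nsmul_eq_mul, Finset.mul_sum]
        ring
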